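/- Let n ≥ 4 and α ∈ ℝ, and let Σ_α = {x ∈ ℝ^{n+1} : x_{n+1} = x_1 x_n + Σ_{i=2}^{n−1} x_i² + x_1² x_2 + α x_1⁴}. Then Σ_α is affinely homogeneous: for any two points a, b ∈ Σ_α there exists an affine bijection of ℝ^{n+1} that maps Σ_α onto Σ_α and maps a to b. -/

import Mathlib

/-- The hypersurface
`Σ_α = {x ∈ ℝ^{n+1} : x_{n+1} = x₁ x_n + Σ_{i=2}^{n−1} x_i² + x₁² x₂ + α x₁⁴}`
(coordinates are 0-indexed: `x₁ = x 0`, `x₂ = x 1`, `x_i = x (i-1)`, `x_n = x (n-1)`,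
`x_{n+1} = x n`). -/
def sigmaWinkelmann (n : ℕ) (hn : 4 ≤ n) (α : ℝ) : Set (Fin (n + 1) → ℝ) :=
  {x | x (Fin.last n) = x 0 * x ⟨n - 1, by omega⟩ +
    (∑ i : Fin (n + 1), if 1 ≤ (i : ℕ) ∧ (i : ℕ) ≤ n - 2 then x i ^ 2 else 0) +
    x 0 ^ 2 * x ⟨1, by omega⟩ + α * x 0 ^ 4}


noncomputable def sing {m : ℕ} (k : Fin m) : Fin m → ℝ := Pi.single k 1
theorem sing_ne {m : ℕ} {k j : Fin m} (h : j ≠ k) : sing k j = 0 := Pi.single_eq_of_ne h 1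
theorem sing_same {m : ℕ} (k : Fin m) : sing k k = 1 := Pi.single_eq_same k 1

noncomputable def shearL {m : ℕ} (k : Fin m) (φ : (Fin m → ℝ) →ₗ[ℝ] ℝ)
    (hφ : φ (sing k) = 0) :
    (Fin m → ℝ) ≃ₗ[ℝ] (Fin m → ℝ) where
  toFun x := x + φ x • sing k
  invFun x := x - φ x • sing k
  map_add' x y := by simp [add_smul]; abel
  map_smul' c x := by simp [smul_smul]
  left_inv x := by simp [hφ]
  right_inv x := by simp [hφ]

theorem shearL_apply {m : ℕ} (k j : Fin m) (φ : (Fin m → ℝ) →ₗ[ℝ] ℝ) (hφ : φ (sing k) = 0)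
    (x : Fin m → ℝ) : shearL k φ hφ x j = x j + φ x * sing k j := by
  simp [shearL]

def mid (n : ℕ) (x y : Fin (n+1) → ℝ) : ℝ :=
  ∑ i : Fin (n+1), if 1 ≤ (i : ℕ) ∧ (i : ℕ) ≤ n - 2 then x i * y i else 0

noncomputable def midL (n : ℕ) (t : Fin (n+1) → ℝ) : (Fin (n+1) → ℝ) →ₗ[ℝ] ℝ where
  toFun x := mid n x t
  map_add' x y := by
    unfold mid
    rw [← Finset.sum_add_distrib]
    exact Finset.sum_congr rfl fun i _ => by by_cases h : 1 ≤ (i:ℕ) ∧ (i:ℕ) ≤ n-2 <;>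
      simp [h, add_mul]
  map_smul' c x := by
    unfold mid
    simp only [smul_eq_mul, RingHom.id_apply]
    rw [Finset.mul_sum]
    exact Finset.sum_congr rfl fun i _ => by by_cases h : 1 ≤ (i:ℕ) ∧ (i:ℕ) ≤ n-2 <;>
      simp [h, mul_assoc]

section
variable (n : ℕ) (hn : 4 ≤ n) (α : ℝ) (t : Fin (n+1) → ℝ)

def j1 : Fin (n+1) := ⟨1, by omega⟩
def jz : Fin (n+1) := ⟨n-1, by omega⟩

-- distinctness
theorem ne01 : (0 : Fin (n+1)) ≠ j1 n hn := by simp [j1, Fin.ext_iff]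
theorem ne0z : (0 : Fin (n+1)) ≠ jz n hn := by simp [jz, Fin.ext_iff]; omega
include hn in
theorem ne0l : (0 : Fin (n+1)) ≠ Fin.last n := by have := hn; simp [Fin.ext_iff]; omega
theorem ne1z : j1 n hn ≠ jz n hn := by simp [j1, jz, Fin.ext_iff]; omega
include hn in
theorem ne1l : j1 n hn ≠ Fin.last n := by have := hn; simp [j1, Fin.ext_iff]; omega
include hn in
theorem nezl : jz n hn ≠ Fin.last n := by have := hn; simp [jz, Fin.ext_iff]; omega

open LinearMap in
noncomputable def phi1 : (Fin (n+1) → ℝ) →ₗ[ℝ] ℝ :=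
  (-4*α*t 0) • proj (0 : Fin (n+1))

open LinearMap in
noncomputable def phi2 : (Fin (n+1) → ℝ) →ₗ[ℝ] ℝ :=
  (2*α*(t 0)^2 - 16*α^2*(t 0)^2 - t (j1 n hn)) • proj (0 : Fin (n+1))
    + ((8*α-2)*t 0) • proj (j1 n hn)

open LinearMap in
noncomputable def phi3 : (Fin (n+1) → ℝ) →ₗ[ℝ] ℝ :=
  (t (jz n hn) + 2*α*(t 0)^3 - 16*α^2*(t 0)^3 + t 0 * t (j1 n hn)
      - 8*α*(t 0)*(t (j1 n hn))) • proj (0 : Fin (n+1))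
    + (8*α*(t 0)^2 - (t 0)^2) • proj (j1 n hn)
    + (t 0) • proj (jz n hn)
    + (2:ℝ) • midL n t

theorem phi1_apply (x : Fin (n+1) → ℝ) : phi1 n α t x = (-4*α*t 0) * x 0 := by
  simp [phi1]
theorem phi2_apply (x : Fin (n+1) → ℝ) :
    phi2 n hn α t x = (2*α*(t 0)^2 - 16*α^2*(t 0)^2 - t (j1 n hn)) * x 0
      + ((8*α-2)*t 0) * x (j1 n hn) := by simp [phi2]
theorem phi3_apply (x : Fin (n+1) → ℝ) :
    phi3 n hn α t x = (t (jz n hn) + 2*α*(t 0)^3 - 16*α^2*(t 0)^3 + t 0 * t (j1 n hn)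
      - 8*α*(t 0)*(t (j1 n hn))) * x 0
      + (8*α*(t 0)^2 - (t 0)^2) * x (j1 n hn)
      + (t 0) * x (jz n hn) + 2 * mid n x t := by simp [phi3, midL]

theorem mid_sing_l : mid n (sing (Fin.last n)) t = 0 := by
  apply Finset.sum_eq_zero
  intro i _
  by_cases h : 1 ≤ (i:ℕ) ∧ (i:ℕ) ≤ n-2
  · have : i ≠ Fin.last n := by simp [Fin.ext_iff]; omega
    simp [h, sing_ne this]
  · simp [h]

include hn in
theorem phi1_last : phi1 n α t (sing (Fin.last n)) = 0 := by
  rw [phi1_apply, sing_ne (ne0l n hn), mul_zero]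
theorem phi1_z : phi1 n α t (sing (jz n hn)) = 0 := by
  rw [phi1_apply, sing_ne (ne0z n hn), mul_zero]
theorem phi2_last : phi2 n hn α t (sing (Fin.last n)) = 0 := by
  rw [phi2_apply, sing_ne (ne0l n hn), sing_ne (ne1l n hn)]; ring

theorem h1 : phi1 n α t (sing (j1 n hn)) = 0 := by
  rw [phi1_apply, sing_ne (ne01 n hn), mul_zero]
theorem h2 : phi2 n hn α t (sing (jz n hn)) = 0 := by
  rw [phi2_apply, sing_ne (ne0z n hn), sing_ne (ne1z n hn)]; ring
theorem h3 : phi3 n hn α t (sing (Fin.last n)) = 0 := by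
  rw [phi3_apply, sing_ne (ne0l n hn), sing_ne (ne1l n hn), sing_ne (nezl n hn),
    mid_sing_l]; ring

noncomputable def Lpsi : (Fin (n+1) → ℝ) ≃ₗ[ℝ] (Fin (n+1) → ℝ) :=
  LinearEquiv.trans (shearL (Fin.last n) (phi3 n hn α t) (h3 n hn α t))
    (LinearEquiv.trans (shearL (jz n hn) (phi2 n hn α t) (h2 n hn α t))
      (shearL (j1 n hn) (phi1 n α t) (h1 n hn α t)))

noncomputable def psi : (Fin (n+1) → ℝ) ≃ᵃ[ℝ] (Fin (n+1) → ℝ) :=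
  AffineEquiv.trans (Lpsi n hn α t).toAffineEquiv
    (AffineEquiv.constVAdd ℝ (Fin (n+1) → ℝ) t)

theorem psi_apply (x : Fin (n+1) → ℝ) (j : Fin (n+1)) :
    psi n hn α t x j = x j + phi3 n hn α t x * sing (Fin.last n) j
      + phi2 n hn α t x * sing (jz n hn) j + phi1 n α t x * sing (j1 n hn) j + t j := by
  have k3 : ∀ (y : Fin (n+1) → ℝ) (c : ℝ),
      phi2 n hn α t (y + c • sing (Fin.last n)) = phi2 n hn α t y := by
    intro y c
    rw [map_add, map_smul, phi2_last n hn α t, smul_zero, add_zero]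
  have k3' : ∀ (y : Fin (n+1) → ℝ) (c : ℝ),
      phi1 n α t (y + c • sing (Fin.last n)) = phi1 n α t y := by
    intro y c
    rw [map_add, map_smul, phi1_last n hn α t, smul_zero, add_zero]
  have k2' : ∀ (y : Fin (n+1) → ℝ) (c : ℝ),
      phi1 n α t (y + c • sing (jz n hn)) = phi1 n α t y := by
    intro y c
    rw [map_add, map_smul, phi1_z n hn α t, smul_zero, add_zero]
  show (t +ᵥ (Lpsi n hn α t) x) j = _
  simp only [Lpsi, LinearEquiv.trans_apply]
  simp only [shearL, LinearEquiv.coe_mk, Equiv.coe_fn_mk, LinearMap.coe_mk, AddHom.coe_mk]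
  rw [k3, k2', k3']
  simp only [vadd_eq_add, Pi.add_apply, smul_eq_mul, Pi.smul_apply]
  ring

theorem psi_zero : psi n hn α t 0 = t := by
  have : (Lpsi n hn α t) 0 = 0 := map_zero _
  show t +ᵥ (Lpsi n hn α t).toAffineEquiv 0 = t
  rw [LinearEquiv.coe_toAffineEquiv, this]
  simp [vadd_eq_add]

theorem P0 (x : Fin (n+1) → ℝ) : psi n hn α t x 0 = x 0 + t 0 := by
  rw [psi_apply, sing_ne (ne0l n hn), sing_ne (ne0z n hn), sing_ne (ne01 n hn)]
  ring

theorem P1 (x : Fin (n+1) → ℝ) :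
    psi n hn α t x (j1 n hn) = x (j1 n hn) + (-4*α*t 0) * x 0 + t (j1 n hn) := by
  rw [psi_apply, sing_ne (ne1l n hn), sing_ne (ne1z n hn), sing_same, phi1_apply]
  ring

theorem Pz (x : Fin (n+1) → ℝ) :
    psi n hn α t x (jz n hn) = x (jz n hn)
      + ((2*α*(t 0)^2 - 16*α^2*(t 0)^2 - t (j1 n hn)) * x 0
          + ((8*α-2)*t 0) * x (j1 n hn)) + t (jz n hn) := by
  rw [psi_apply, sing_ne (nezl n hn), sing_same, sing_ne (Ne.symm (ne1z n hn)), phi2_apply]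
  ring

theorem Pl (x : Fin (n+1) → ℝ) :
    psi n hn α t x (Fin.last n) = x (Fin.last n)
      + ((t (jz n hn) + 2*α*(t 0)^3 - 16*α^2*(t 0)^3 + t 0 * t (j1 n hn)
            - 8*α*(t 0)*(t (j1 n hn))) * x 0
          + (8*α*(t 0)^2 - (t 0)^2) * x (j1 n hn)
          + (t 0) * x (jz n hn) + 2 * mid n x t) + t (Fin.last n) := by
  rw [psi_apply, sing_same, sing_ne (Ne.symm (nezl n hn)), sing_ne (Ne.symm (ne1l n hn)),
    phi3_apply]
  ring

theorem Pmid (x : Fin (n+1) → ℝ) (i : Fin (n+1)) (hi1 : 1 ≤ (i:ℕ)) (hi2 : (i:ℕ) ≤ n-2)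
    (hij : i ≠ j1 n hn) : psi n hn α t x i = x i + t i := by
  have e1 : i ≠ Fin.last n := by have := hn; simp [Fin.ext_iff]; omega
  have e2 : i ≠ jz n hn := by have := hn; simp [jz, Fin.ext_iff]; omega
  rw [psi_apply, sing_ne e1, sing_ne e2, sing_ne hij]
  ring

include hn in
theorem HS (x : Fin (n+1) → ℝ) :
    (∑ i : Fin (n+1), if 1 ≤ (i : ℕ) ∧ (i : ℕ) ≤ n - 2 then (psi n hn α t x) i ^ 2 else 0)
    = (∑ i : Fin (n+1), if 1 ≤ (i : ℕ) ∧ (i : ℕ) ≤ n - 2 then x i ^ 2 else 0)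
      + 2 * mid n x t + mid n t t
      + (2*(x (j1 n hn) + t (j1 n hn))*((-4*α*t 0) * x 0) + ((-4*α*t 0) * x 0)^2) := by
  have point : ∀ i : Fin (n+1),
      (if 1 ≤ (i : ℕ) ∧ (i : ℕ) ≤ n - 2 then (psi n hn α t x) i ^ 2 else 0)
      = ((if 1 ≤ (i : ℕ) ∧ (i : ℕ) ≤ n - 2 then x i ^ 2 else 0)
          + (if 1 ≤ (i : ℕ) ∧ (i : ℕ) ≤ n - 2 then 2*(x i * t i) else 0)
          + (if 1 ≤ (i : ℕ) ∧ (i : ℕ) ≤ n - 2 then t i * t i else 0))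
        + (if i = j1 n hn then
            2*(x (j1 n hn) + t (j1 n hn))*((-4*α*t 0) * x 0) + ((-4*α*t 0) * x 0)^2
          else 0) := by
    intro i
    by_cases hij : i = j1 n hn
    · subst hij
      have hc : 1 ≤ ((j1 n hn : Fin (n+1)) : ℕ) ∧ ((j1 n hn : Fin (n+1)) : ℕ) ≤ n - 2 := by
        have := hn; simp [j1]; omega
      rw [if_pos hc, if_pos hc, if_pos hc, if_pos hc, if_pos rfl, P1]
      ring
    · rw [if_neg hij, add_zero]
      by_cases hc : 1 ≤ (i : ℕ) ∧ (i : ℕ) ≤ n - 2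
      · rw [if_pos hc, if_pos hc, if_pos hc, if_pos hc, Pmid n hn α t x i hc.1 hc.2 hij]
        ring
      · rw [if_neg hc, if_neg hc, if_neg hc, if_neg hc]
        ring
  rw [Finset.sum_congr rfl fun i _ => point i, Finset.sum_add_distrib,
    Finset.sum_add_distrib, Finset.sum_add_distrib,
    Finset.sum_ite_eq' Finset.univ (j1 n hn)]
  have e2 : (∑ i : Fin (n+1), if 1 ≤ (i : ℕ) ∧ (i : ℕ) ≤ n - 2 then 2*(x i * t i) else 0)
      = 2 * mid n x t := by
    rw [mid, Finset.mul_sum]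
    exact Finset.sum_congr rfl fun i _ => by split <;> simp
  have e3 : (∑ i : Fin (n+1), if 1 ≤ (i : ℕ) ∧ (i : ℕ) ≤ n - 2 then t i * t i else 0)
      = mid n t t := rfl
  rw [e2, e3]
  simp

include hn in
theorem psi_mem (ht : t (Fin.last n) = t 0 * t (jz n hn)
      + (∑ i : Fin (n+1), if 1 ≤ (i : ℕ) ∧ (i : ℕ) ≤ n - 2 then t i ^ 2 else 0)
      + t 0 ^ 2 * t (j1 n hn) + α * t 0 ^ 4) (x : Fin (n+1) → ℝ) :
    (x (Fin.last n) = x 0 * x (jz n hn)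
      + (∑ i : Fin (n+1), if 1 ≤ (i : ℕ) ∧ (i : ℕ) ≤ n - 2 then x i ^ 2 else 0)
      + x 0 ^ 2 * x (j1 n hn) + α * x 0 ^ 4)
    ↔ (psi n hn α t x (Fin.last n) = psi n hn α t x 0 * psi n hn α t x (jz n hn)
      + (∑ i : Fin (n+1), if 1 ≤ (i : ℕ) ∧ (i : ℕ) ≤ n - 2 then (psi n hn α t x) i ^ 2 else 0)
      + (psi n hn α t x 0) ^ 2 * psi n hn α t x (j1 n hn)
      + α * (psi n hn α t x 0) ^ 4) := by
  have hmt : (∑ i : Fin (n+1), if 1 ≤ (i : ℕ) ∧ (i : ℕ) ≤ n - 2 then t i ^ 2 else 0)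
      = mid n t t := by
    unfold mid
    exact Finset.sum_congr rfl fun i _ => by split <;> ring
  rw [hmt] at ht
  rw [P0, P1, Pz, Pl, HS n hn]
  constructor
  · intro h
    linear_combination h + ht
  · intro h
    linear_combination h - ht

end

/-- Hypersurfaces (3) of Theorem 2 (higher-dimensional analogues of the Winkelmann
hypersurface): each `Σ_α` is affinely homogeneous — any point can be mapped to any other
point by an affine bijection of `ℝ^{n+1}` preserving `Σ_α`. -/
theorem sigmaWinkelmann_affinely_homogeneous (n : ℕ) (hn : 4 ≤ n) (α : ℝ) :
    ∀ a ∈ sigmaWinkelmann n hn α, ∀ b ∈ sigmaWinkelmann n hn α,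
      ∃ φ : (Fin (n + 1) → ℝ) ≃ᵃ[ℝ] (Fin (n + 1) → ℝ),
        φ '' sigmaWinkelmann n hn α = sigmaWinkelmann n hn α ∧ φ a = b := by
  intro a ha b hb
  have key : ∀ t : Fin (n+1) → ℝ, t ∈ sigmaWinkelmann n hn α →
      ∀ x : Fin (n+1) → ℝ,
        (x ∈ sigmaWinkelmann n hn α ↔ psi n hn α t x ∈ sigmaWinkelmann n hn α) :=
    fun t htt x => psi_mem n hn α t htt x
  refine ⟨AffineEquiv.trans (psi n hn α a).symm (psi n hn α b), ?_, ?_⟩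
  · ext y
    simp only [Set.mem_image, AffineEquiv.trans_apply]
    constructor
    · rintro ⟨x, hx, rfl⟩
      have h1 : (psi n hn α a).symm x ∈ sigmaWinkelmann n hn α := by
        rw [key a ha ((psi n hn α a).symm x), AffineEquiv.apply_symm_apply]
        exact hx
      exact (key b hb _).1 h1
    · intro hy
      refine ⟨psi n hn α a ((psi n hn α b).symm y), ?_, ?_⟩
      · apply (key a ha _).1
        rw [key b hb ((psi n hn α b).symm y), AffineEquiv.apply_symm_apply]
        exact hy
      · rw [AffineEquiv.symm_apply_apply, AffineEquiv.apply_symm_apply]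
  · have h0 : (psi n hn α a).symm a = 0 := by
      have := congrArg (psi n hn α a).symm (psi_zero n hn α a)
      rw [AffineEquiv.symm_apply_apply] at this; exact this.symm
    rw [AffineEquiv.trans_apply, h0, psi_zero]
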